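/- Suppose 𝓕 = ⟨F_0, …, F_k⟩ is P-sharp in U, and let C_0, …, C_{m−1} be pairwise disjoint subsets of P, each closed in the subspace P. Then there are at most k + 1 indices l < m for which there is no open set U' ⊆ U such that 𝓕 is (P ∖ C_l)-sharp in U'. -/

import Mathlib

open Set Topology

/-- A set is `Σ⁰₂` (Fσ) if it is a countable union of closed sets. -/
def IsFsigma {X : Type*} [TopologicalSpace X] (A : Set X) : Prop :=
  ∃ F : ℕ → Set X, (∀ n, IsClosed (F n)) ∧ A = ⋃ n, F n

/-- A set is `Σ⁰₃` if it is a countable union of Gδ sets. -/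
def IsSigma03 {X : Type*} [TopologicalSpace X] (A : Set X) : Prop :=
  ∃ G : ℕ → Set X, (∀ n, IsGδ (G n)) ∧ A = ⋃ n, G n

/-- A set is `Δ⁰₃` if both it and its complement are `Σ⁰₃`. -/
def IsDelta03 {X : Type*} [TopologicalSpace X] (A : Set X) : Prop :=
  IsSigma03 A ∧ IsSigma03 Aᶜ

/-- `Σ⁰₂`-measurable function: preimages of open sets are Fσ. -/
def Sigma2Measurable {X Y : Type*} [TopologicalSpace X] [TopologicalSpace Y]
    (f : X → Y) : Prop :=
  ∀ U : Set Y, IsOpen U → IsFsigma (f ⁻¹' U)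

/-- `Σ⁰₃`-measurable function: preimages of open sets are `Σ⁰₃`. -/
def Sigma3Measurable {X Y : Type*} [TopologicalSpace X] [TopologicalSpace Y]
    (f : X → Y) : Prop :=
  ∀ U : Set Y, IsOpen U → IsSigma03 (f ⁻¹' U)

/-- `f ∈ dec(Σ⁰₂, Δ⁰₃)`: there is a countable partition of the domain into `Δ⁰₃` pieces
on each of which `f` restricts (with the subspace topology) to a `Σ⁰₂`-measurable function. -/
def DecSigma2 {X Y : Type*} [TopologicalSpace X] [TopologicalSpace Y]
    (f : X → Y) : Prop :=
  ∃ A : ℕ → Set X, (∀ m n, m ≠ n → Disjoint (A m) (A n)) ∧ (⋃ n, A n) = Set.univ ∧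
    (∀ n, IsDelta03 (A n)) ∧ ∀ n, Sigma2Measurable ((A n).restrict f)

/-- `f ∈ dec(Σ⁰₁, Δ⁰₃)`: there is a countable partition of the domain into `Δ⁰₃` pieces
on each of which `f` restricts (with the subspace topology) to a continuous function. -/
def DecCont {X Y : Type*} [TopologicalSpace X] [TopologicalSpace Y]
    (f : X → Y) : Prop :=
  ∃ A : ℕ → Set X, (∀ m n, m ≠ n → Disjoint (A m) (A n)) ∧ (⋃ n, A n) = Set.univ ∧
    (∀ n, IsDelta03 (A n)) ∧ ∀ n, Continuous ((A n).restrict f)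

/-- `⟨F₀⟩` is `P`-sharp in `U` (base case of the sharpness notion for `dec(Σ⁰₂, Δ⁰₃)`). -/
def Sharp0 {X Y : Type*} [TopologicalSpace X] [TopologicalSpace Y]
    (f : X → Y) (P : Set Y) (F0 U : Set X) : Prop :=
  (U ∩ F0).Nonempty ∧ ∀ U' : Set X, IsOpen U' → U' ⊆ U → (U' ∩ F0).Nonempty →
    ¬ DecSigma2 ((f ⁻¹' P ∩ F0 ∩ U').restrict f)

/-- `⟨F 0, …, F k⟩` is `P`-sharp in `U`. -/
def Sharp {X Y : Type*} [TopologicalSpace X] [TopologicalSpace Y]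
    (f : X → Y) (P : Set Y) (F : ℕ → Set X) : ℕ → Set X → Prop
  | 0, U => Sharp0 f P (F 0) U
  | (k+1), U => Sharp0 f P (F (k+1)) U ∧
      ∀ U' : Set X, IsOpen U' → U' ⊆ U → (U' ∩ F (k+1)).Nonempty →
        ∃ U'' : Set X, IsOpen U'' ∧ U'' ⊆ U' ∧ Sharp f P F k U''

section Aux
open TopologicalSpace
variable {α β γ : Type*} [TopologicalSpace α] [TopologicalSpace β] [TopologicalSpace γ]

lemma isGδ_of_isClosed' [PseudoMetrizableSpace α] {s : Set α} (h : IsClosed s) : IsGδ s := by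
  letI := pseudoMetrizableSpacePseudoMetric α
  exact h.isGδ

lemma isGδ_preimage {e : γ → α} (he : Continuous e) {s : Set α} (h : IsGδ s) :
    IsGδ (e ⁻¹' s) := by
  obtain ⟨g, hgo, rfl⟩ := isGδ_iff_eq_iInter_nat.1 h
  rw [preimage_iInter]
  exact .iInter fun n => ((hgo n).preimage he).isGδ

lemma IsGδ.isSigma03 {s : Set α} (h : IsGδ s) : IsSigma03 s :=
  ⟨fun _ => s, fun _ => h, (iUnion_const s).symm⟩

lemma isSigma03_empty : IsSigma03 (∅ : Set α) := IsGδ.empty.isSigma03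
lemma isSigma03_univ : IsSigma03 (univ : Set α) := IsGδ.univ.isSigma03

lemma isSigma03_iUnion {s : ℕ → Set α} (h : ∀ n, IsSigma03 (s n)) : IsSigma03 (⋃ n, s n) := by
  choose G hG hsG using h
  refine ⟨fun p => G p.unpair.1 p.unpair.2, fun p => hG _ _, ?_⟩
  ext x
  simp only [mem_iUnion]
  constructor
  · rintro ⟨n, hx⟩
    rw [hsG n] at hx
    rw [mem_iUnion] at hx
    obtain ⟨q, hq⟩ := hx
    exact ⟨Nat.pair n q, by simpa [Nat.unpair_pair] using hq⟩
  · rintro ⟨p, hp⟩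
    refine ⟨p.unpair.1, ?_⟩
    rw [hsG, mem_iUnion]
    exact ⟨p.unpair.2, hp⟩

lemma isSigma03_union {s t : Set α} (hs : IsSigma03 s) (ht : IsSigma03 t) :
    IsSigma03 (s ∪ t) := by
  have he : s ∪ t = ⋃ n : ℕ, (if n = 0 then s else t) := by
    ext x
    simp only [mem_union, mem_iUnion]
    constructor
    · rintro (h | h)
      · exact ⟨0, by simpa using h⟩
      · exact ⟨1, by simpa using h⟩
    · rintro ⟨n, hn⟩
      by_cases h : n = 0
      · rw [h] at hn; simp only [if_pos rfl] at hn; exact Or.inl hn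
      · rw [if_neg h] at hn; exact Or.inr hn
  rw [he]
  exact isSigma03_iUnion fun n => by split <;> assumption

lemma isSigma03_inter {s t : Set α} (hs : IsSigma03 s) (ht : IsSigma03 t) :
    IsSigma03 (s ∩ t) := by
  obtain ⟨G, hG, rfl⟩ := hs
  obtain ⟨K, hK, rfl⟩ := ht
  refine ⟨fun p => G p.unpair.1 ∩ K p.unpair.2, fun p => (hG _).inter (hK _), ?_⟩
  ext x
  simp only [mem_inter_iff, mem_iUnion]
  constructor
  · rintro ⟨⟨n, hn⟩, ⟨q, hq⟩⟩
    exact ⟨Nat.pair n q, by simp only [Nat.unpair_pair]; exact ⟨hn, hq⟩⟩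
  · rintro ⟨p, hp1, hp2⟩
    exact ⟨⟨_, hp1⟩, ⟨_, hp2⟩⟩

lemma isSigma03_preimage {e : γ → α} (he : Continuous e) {s : Set α} (h : IsSigma03 s) :
    IsSigma03 (e ⁻¹' s) := by
  obtain ⟨G, hG, rfl⟩ := h
  exact ⟨fun n => e ⁻¹' G n, fun n => isGδ_preimage he (hG n), by rw [preimage_iUnion]⟩

lemma isSigma03_of_isClosed [PseudoMetrizableSpace α] {s : Set α} (h : IsClosed s) :
    IsSigma03 s := (isGδ_of_isClosed' h).isSigma03

lemma isSigma03_compl_of_isGδ [PseudoMetrizableSpace α] {s : Set α} (h : IsGδ s) :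
    IsSigma03 sᶜ := by
  obtain ⟨g, hgo, rfl⟩ := isGδ_iff_eq_iInter_nat.1 h
  rw [compl_iInter]
  exact isSigma03_iUnion fun n => isSigma03_of_isClosed (isClosed_compl_iff.2 (hgo n))

lemma isDelta03_of_isGδ [PseudoMetrizableSpace α] {s : Set α} (h : IsGδ s) : IsDelta03 s :=
  ⟨h.isSigma03, isSigma03_compl_of_isGδ h⟩

lemma isDelta03_empty : IsDelta03 (∅ : Set α) :=
  ⟨isSigma03_empty, by rw [compl_empty]; exact isSigma03_univ⟩

lemma IsDelta03.compl {s : Set α} (h : IsDelta03 s) : IsDelta03 sᶜ :=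
  ⟨h.2, by rw [compl_compl]; exact h.1⟩

lemma IsDelta03.union {s t : Set α} (hs : IsDelta03 s) (ht : IsDelta03 t) :
    IsDelta03 (s ∪ t) :=
  ⟨isSigma03_union hs.1 ht.1, by rw [compl_union]; exact isSigma03_inter hs.2 ht.2⟩

lemma IsDelta03.inter {s t : Set α} (hs : IsDelta03 s) (ht : IsDelta03 t) :
    IsDelta03 (s ∩ t) :=
  ⟨isSigma03_inter hs.1 ht.1, by rw [compl_inter]; exact isSigma03_union hs.2 ht.2⟩

lemma IsDelta03.diff {s t : Set α} (hs : IsDelta03 s) (ht : IsDelta03 t) :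
    IsDelta03 (s \ t) := by
  rw [diff_eq]; exact hs.inter ht.compl

lemma isDelta03_biUnion_lt [PseudoMetrizableSpace α] {H : ℕ → Set α}
    (hH : ∀ n, IsDelta03 (H n)) : ∀ n, IsDelta03 (⋃ m, ⋃ _ : m < n, H m)
  | 0 => by simpa using (isDelta03_empty : IsDelta03 (∅ : Set α))
  | (n+1) => by
    have he : (⋃ m, ⋃ _ : m < n + 1, H m) = (⋃ m, ⋃ _ : m < n, H m) ∪ H n := by
      ext x
      simp only [mem_iUnion, mem_union, Nat.lt_succ_iff_lt_or_eq]
      constructor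
      · rintro ⟨m, (h | rfl), hx⟩
        · exact Or.inl ⟨m, h, hx⟩
        · exact Or.inr hx
      · rintro (⟨m, h, hx⟩ | hx)
        · exact ⟨m, Or.inl h, hx⟩
        · exact ⟨n, Or.inr rfl, hx⟩
    rw [he]
    exact (isDelta03_biUnion_lt hH n).union (hH n)

lemma isGδ_subtype {S : Set α} {T : Set ↥S} (h : IsGδ T) :
    ∃ G : Set α, IsGδ G ∧ T = Subtype.val ⁻¹' G := by
  obtain ⟨g, hgo, rfl⟩ := isGδ_iff_eq_iInter_nat.1 h
  choose V hVo hVe using fun n => isOpen_induced_iff.1 (hgo n)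
  refine ⟨⋂ n, V n, .iInter_of_isOpen hVo, ?_⟩
  rw [preimage_iInter]
  exact iInter_congr fun n => (hVe n).symm

lemma isSigma03_subtype {S : Set α} {T : Set ↥S} (h : IsSigma03 T) :
    ∃ A : Set α, IsSigma03 A ∧ T = Subtype.val ⁻¹' A := by
  obtain ⟨G, hG, rfl⟩ := h
  choose V hV hVe using fun n => isGδ_subtype (hG n)
  refine ⟨⋃ n, V n, isSigma03_iUnion fun n => (hV n).isSigma03, ?_⟩
  rw [preimage_iUnion]
  exact iUnion_congr hVe

lemma isSigma03_image_val {S : Set α} (hS : IsSigma03 S) {T : Set ↥S} (h : IsSigma03 T) :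
    IsSigma03 (Subtype.val '' T) := by
  obtain ⟨A, hA, rfl⟩ := isSigma03_subtype h
  rw [Subtype.image_preimage_coe]
  exact isSigma03_inter hS hA

omit [TopologicalSpace α] in
lemma compl_image_val {S : Set α} (T : Set ↥S) :
    (Subtype.val '' T)ᶜ = Sᶜ ∪ Subtype.val '' (Tᶜ) := by
  ext x
  constructor
  · intro hx
    by_cases hxS : x ∈ S
    · exact Or.inr ⟨⟨x, hxS⟩, fun hT => hx ⟨⟨x, hxS⟩, hT, rfl⟩, rfl⟩
    · exact Or.inl hxS
  · rintro (hx | ⟨a, haT, rfl⟩) hmem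
    · exact hx (Subtype.coe_image_subset S T hmem)
    · obtain ⟨b, hbT, hba⟩ := hmem
      exact haT (Subtype.ext hba ▸ hbT)

lemma isDelta03_image_val {S : Set α} (hS : IsDelta03 S) {T : Set ↥S} (h : IsDelta03 T) :
    IsDelta03 (Subtype.val '' T) := by
  refine ⟨isSigma03_image_val hS.1 h.1, ?_⟩
  rw [compl_image_val]
  exact isSigma03_union hS.2 (isSigma03_image_val hS.1 h.2)

lemma isFsigma_preimage {e : γ → α} (he : Continuous e) {s : Set α} (h : IsFsigma s) :
    IsFsigma (e ⁻¹' s) := by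
  obtain ⟨G, hG, rfl⟩ := h
  exact ⟨fun n => e ⁻¹' G n, fun n => (hG n).preimage he, by rw [preimage_iUnion]⟩

lemma sigma2_comp {g : α → β} {e : γ → α} (hg : Sigma2Measurable g) (he : Continuous e) :
    Sigma2Measurable (g ∘ e) := fun U hU => by
  rw [preimage_comp]
  exact isFsigma_preimage he (hg U hU)

lemma isDelta03_preimage {e : γ → α} (he : Continuous e) {s : Set α} (h : IsDelta03 s) :
    IsDelta03 (e ⁻¹' s) :=
  ⟨isSigma03_preimage he h.1, by rw [← preimage_compl]; exact isSigma03_preimage he h.2⟩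

lemma dec_comp {g : α → β} {e : γ → α} (hg : DecSigma2 g) (he : Continuous e) :
    DecSigma2 (g ∘ e) := by
  obtain ⟨A, hdisj, hcov, hdelta, hmeas⟩ := hg
  refine ⟨fun n => e ⁻¹' A n, fun m n h => (hdisj m n h).preimage e,
    by rw [← preimage_iUnion, hcov, preimage_univ],
    fun n => isDelta03_preimage he (hdelta n), fun n => ?_⟩
  have heq : ((e ⁻¹' A n).restrict (g ∘ e))
      = ((A n).restrict g) ∘ (fun x : ↥(e ⁻¹' A n) => (⟨e x.1, x.2⟩ : ↥(A n))) := rfl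
  rw [heq]
  exact sigma2_comp (hmeas n) ((he.comp continuous_subtype_val).subtype_mk _)

lemma dec_mono {f : α → β} {A B : Set α} (hBA : B ⊆ A) (h : DecSigma2 (A.restrict f)) :
    DecSigma2 (B.restrict f) := by
  have heq : B.restrict f = (A.restrict f) ∘ (inclusion hBA) := rfl
  rw [heq]
  exact dec_comp h (continuous_inclusion hBA)

lemma sigma2_transfer_image {f : α → β} {S : Set α} {T : Set ↥S}
    (h : Sigma2Measurable (T.restrict (S.restrict f))) :
    Sigma2Measurable ((Subtype.val '' T).restrict f) := by
  have hsub : Subtype.val '' T ⊆ S := Subtype.coe_image_subset S T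
  have key : ∀ x (hx : x ∈ Subtype.val '' T), (⟨x, hsub hx⟩ : ↥S) ∈ T := by
    rintro x ⟨a, haT, rfl⟩
    have hae : (⟨a.1, hsub ⟨a, haT, rfl⟩⟩ : ↥S) = a := Subtype.ext rfl
    rw [hae]; exact haT
  have heq : (Subtype.val '' T).restrict f
      = (T.restrict (S.restrict f)) ∘
        (fun x : ↥(Subtype.val '' T) => (⟨⟨x.1, hsub x.2⟩, key x.1 x.2⟩ : ↥T)) := rfl
  rw [heq]
  exact sigma2_comp h ((continuous_subtype_val.subtype_mk _).subtype_mk _)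

lemma dec_transfer {f : α → β} {S : Set α} {T : Set ↥S}
    (h : DecSigma2 ((Subtype.val '' T).restrict f)) :
    DecSigma2 (T.restrict (S.restrict f)) := by
  have heq : T.restrict (S.restrict f)
      = ((Subtype.val '' T).restrict f) ∘
        (fun x : ↥T => (⟨x.1.1, ⟨x.1, x.2, rfl⟩⟩ : ↥(Subtype.val '' T))) := rfl
  rw [heq]
  exact dec_comp h ((continuous_subtype_val.comp continuous_subtype_val).subtype_mk _)

lemma dec_glue {f : α → β} {B : ℕ → Set α}
    (hdisj : ∀ m n, m ≠ n → Disjoint (B m) (B n)) (hcov : (⋃ n, B n) = univ)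
    (hdelta : ∀ n, IsDelta03 (B n)) (hdec : ∀ n, DecSigma2 ((B n).restrict f)) :
    DecSigma2 f := by
  choose A hAdisj hAcov hAdelta hAmeas using hdec
  refine ⟨fun p => Subtype.val '' (A p.unpair.1 p.unpair.2), ?_, ?_, ?_, ?_⟩
  · have hgen : ∀ c d : ℕ × ℕ, c ≠ d →
        Disjoint (Subtype.val '' (A c.1 c.2)) (Subtype.val '' (A d.1 d.2)) := by
      rintro ⟨n, m⟩ ⟨n', m'⟩ hcd
      by_cases hn : n = n'
      · subst hn
        have hm : m ≠ m' := fun h => hcd (by rw [h])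
        exact (Set.disjoint_image_iff Subtype.coe_injective).2 (hAdisj n m m' hm)
      · exact Set.disjoint_of_subset (Subtype.coe_image_subset _ _)
          (Subtype.coe_image_subset _ _) (hdisj n n' hn)
    intro p q hpq
    refine hgen p.unpair q.unpair (fun h => hpq ?_)
    rw [← Nat.pair_unpair p, ← Nat.pair_unpair q, h]
  · rw [eq_univ_iff_forall]
    intro x
    have hx : x ∈ ⋃ n, B n := hcov ▸ mem_univ x
    rw [mem_iUnion] at hx
    obtain ⟨n, hxn⟩ := hx
    have hx2 : (⟨x, hxn⟩ : ↥(B n)) ∈ ⋃ m, A n m := (hAcov n) ▸ mem_univ _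
    rw [mem_iUnion] at hx2
    obtain ⟨q, hq⟩ := hx2
    have h1 : (n, q) = (Nat.pair n q).unpair := (Nat.unpair_pair n q).symm
    have hx' : ∃ hxn : x ∈ B (n, q).1, (⟨x, hxn⟩ : ↥(B (n, q).1)) ∈ A (n, q).1 (n, q).2 :=
      ⟨hxn, hq⟩
    rw [h1] at hx'
    obtain ⟨h2, h3⟩ := hx'
    exact mem_iUnion.2 ⟨Nat.pair n q, ⟨⟨x, h2⟩, h3, rfl⟩⟩
  · exact fun p => isDelta03_image_val (hdelta _) (hAdelta _ _)
  · exact fun p => sigma2_transfer_image (hAmeas _ _)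

end Aux

section Sharpness
variable {X Y : Type*} [TopologicalSpace X] [TopologicalSpace Y]

lemma sharp_zero {f : X → Y} {P : Set Y} {F : ℕ → Set X} {U : Set X} :
    Sharp f P F 0 U ↔ Sharp0 f P (F 0) U := Iff.rfl

lemma sharp_succ {f : X → Y} {P : Set Y} {F : ℕ → Set X} {k : ℕ} {U : Set X} :
    Sharp f P F (k+1) U ↔ (Sharp0 f P (F (k+1)) U ∧
      ∀ U' : Set X, IsOpen U' → U' ⊆ U → (U' ∩ F (k+1)).Nonempty →
        ∃ U'' : Set X, IsOpen U'' ∧ U'' ⊆ U' ∧ Sharp f P F k U'') := Iff.rfl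

lemma sharp0_mono {f : X → Y} {P : Set Y} {F0 U V : Set X}
    (h : Sharp0 f P F0 U) (hVU : V ⊆ U) (hne : (V ∩ F0).Nonempty) : Sharp0 f P F0 V :=
  ⟨hne, fun U' hU'o hU'V => h.2 U' hU'o (hU'V.trans hVU)⟩

lemma pair_lemma [PolishSpace X] {f : X → Y} (hf : Sigma3Measurable f)
    {P C₁ C₂ : Set Y} {F0 W : Set X}
    (hW : IsOpen W) (h : Sharp0 f P F0 W)
    (h1 : C₁ ⊆ P) (h2 : C₂ ⊆ P) (hd : Disjoint C₁ C₂)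
    (hc1 : IsClosed ((Subtype.val ⁻¹' C₁) : Set ↥P))
    (hc2 : IsClosed ((Subtype.val ⁻¹' C₂) : Set ↥P))
    (tb1 : ∀ V, IsOpen V → V ⊆ W → ¬ Sharp0 f (P \ C₁) F0 V)
    (tb2 : ∀ V, IsOpen V → V ⊆ W → ¬ Sharp0 f (P \ C₂) F0 V) : False := by
  classical
  obtain ⟨hne, hnd⟩ := h
  have t1 := tb1 W hW subset_rfl
  unfold Sharp0 at t1
  push_neg at t1
  obtain ⟨V, hVo, hVW, hVne, hdec1⟩ := t1 hne
  have t2 := tb2 V hVo hVW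
  unfold Sharp0 at t2
  push_neg at t2
  obtain ⟨V', hV'o, hV'V, hV'ne, hdec2⟩ := t2 hVne
  refine hnd V' hV'o (hV'V.trans hVW) hV'ne ?_
  have hdec1' : DecSigma2 ((f ⁻¹' (P \ C₁) ∩ F0 ∩ V').restrict f) :=
    dec_mono (inter_subset_inter (subset_refl _) hV'V) hdec1
  set S : Set X := f ⁻¹' P ∩ F0 ∩ V' with hSdef
  obtain ⟨D₁, hD₁c, hD₁e⟩ := isClosed_induced_iff.1 hc1
  obtain ⟨D₂, hD₂c, hD₂e⟩ := isClosed_induced_iff.1 hc2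
  have key₁ : ∀ y, y ∈ P → (y ∈ C₁ ↔ y ∈ D₁) := by
    intro y hy
    have := Set.ext_iff.1 hD₁e ⟨y, hy⟩
    simpa using this.symm
  have key₂ : ∀ y, y ∈ P → (y ∈ C₂ ↔ y ∈ D₂) := by
    intro y hy
    have := Set.ext_iff.1 hD₂e ⟨y, hy⟩
    simpa using this.symm
  have hmemP : ∀ z : ↥S, f z.1 ∈ P := fun z => z.2.1.1
  set A₁ : Set ↥S := (fun z : ↥S => f z.1) ⁻¹' D₁ᶜ with hA₁def
  set A₂ : Set ↥S := (fun z : ↥S => f z.1) ⁻¹' D₂ᶜ with hA₂def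
  have hA₁s : IsSigma03 A₁ :=
    isSigma03_preimage continuous_subtype_val (hf _ hD₁c.isOpen_compl)
  have hA₂s : IsSigma03 A₂ :=
    isSigma03_preimage continuous_subtype_val (hf _ hD₂c.isOpen_compl)
  have hcover : A₁ ∪ A₂ = univ := by
    rw [eq_univ_iff_forall]
    intro z
    rw [mem_union]
    by_contra hcon
    push_neg at hcon
    obtain ⟨hz1, hz2⟩ := hcon
    rw [hA₁def, mem_preimage, notMem_compl_iff] at hz1
    rw [hA₂def, mem_preimage, notMem_compl_iff] at hz2
    exact Set.disjoint_left.1 hd ((key₁ _ (hmemP z)).2 hz1) ((key₂ _ (hmemP z)).2 hz2)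
  have him₁ : Subtype.val '' A₁ ⊆ f ⁻¹' (P \ C₁) ∩ F0 ∩ V' := by
    rintro x ⟨z, hz, rfl⟩
    exact ⟨⟨⟨hmemP z, fun hc => hz ((key₁ _ (hmemP z)).1 hc)⟩, z.2.1.2⟩, z.2.2⟩
  have him₂ : Subtype.val '' A₂ ⊆ f ⁻¹' (P \ C₂) ∩ F0 ∩ V' := by
    rintro x ⟨z, hz, rfl⟩
    exact ⟨⟨⟨hmemP z, fun hc => hz ((key₂ _ (hmemP z)).1 hc)⟩, z.2.1.2⟩, z.2.2⟩
  have hdecA₁ : DecSigma2 ((Subtype.val '' A₁).restrict f) := dec_mono him₁ hdec1'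
  have hdecA₂ : DecSigma2 ((Subtype.val '' A₂).restrict f) := dec_mono him₂ hdec2
  obtain ⟨G₁, hG₁, hG₁e⟩ := hA₁s
  obtain ⟨G₂, hG₂, hG₂e⟩ := hA₂s
  set H : ℕ → Set ↥S := fun n => if Even n then G₁ (n / 2) else G₂ (n / 2) with hHdef
  have hHn : ∀ n, H n = if Even n then G₁ (n / 2) else G₂ (n / 2) := fun n => rfl
  have hHgδ : ∀ n, IsGδ (H n) := by
    intro n
    rw [hHn n]
    by_cases he : Even n
    · rw [if_pos he]; exact hG₁ _
    · rw [if_neg he]; exact hG₂ _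
  have hHsub : ∀ n, H n ⊆ A₁ ∪ A₂ := by
    intro n
    rw [hHn n]
    by_cases he : Even n
    · rw [if_pos he]
      refine subset_union_left.trans' ?_
      rw [hG₁e]
      exact subset_iUnion G₁ (n / 2)
    · rw [if_neg he]
      refine subset_union_right.trans' ?_
      rw [hG₂e]
      exact subset_iUnion G₂ (n / 2)
  set B : ℕ → Set ↥S := fun n => H n \ ⋃ m, ⋃ _ : m < n, H m with hBdef
  have hBH : ∀ n, B n ⊆ H n := fun n => diff_subset
  have hBdisj : ∀ m n, m ≠ n → Disjoint (B m) (B n) := by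
    intro m n hmn
    rw [Set.disjoint_left]
    rcases lt_or_gt_of_ne hmn with hlt | hlt
    · intro z hzm hzn
      exact hzn.2 (mem_iUnion.2 ⟨m, mem_iUnion.2 ⟨hlt, hzm.1⟩⟩)
    · intro z hzm hzn
      exact hzm.2 (mem_iUnion.2 ⟨n, mem_iUnion.2 ⟨hlt, hzn.1⟩⟩)
  have hBcov : (⋃ n, B n) = univ := by
    rw [eq_univ_iff_forall]
    intro z
    have hz : ∃ n, z ∈ H n := by
      have hzu : z ∈ A₁ ∪ A₂ := hcover ▸ mem_univ z
      rcases hzu with hz1 | hz2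
      · rw [hG₁e, mem_iUnion] at hz1
        obtain ⟨q, hq⟩ := hz1
        refine ⟨2 * q, ?_⟩
        have he : Even (2 * q) := even_two_mul q
        have hdiv : 2 * q / 2 = q := by omega
        rw [hHn (2 * q), if_pos he, hdiv]
        exact hq
      · rw [hG₂e, mem_iUnion] at hz2
        obtain ⟨q, hq⟩ := hz2
        refine ⟨2 * q + 1, ?_⟩
        have he : ¬ Even (2 * q + 1) := by rw [Nat.even_iff]; omega
        have hdiv : (2 * q + 1) / 2 = q := by omega
        rw [hHn (2 * q + 1), if_neg he, hdiv]
        exact hq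
    rw [mem_iUnion]
    refine ⟨Nat.find hz, Nat.find_spec hz, ?_⟩
    intro hmem
    rw [mem_iUnion] at hmem
    obtain ⟨j, hj⟩ := hmem
    rw [mem_iUnion] at hj
    obtain ⟨hjlt, hzj⟩ := hj
    exact Nat.find_min hz hjlt hzj
  have hBdelta : ∀ n, IsDelta03 (B n) := fun n =>
    (isDelta03_of_isGδ (hHgδ n)).diff
      (isDelta03_biUnion_lt (fun j => isDelta03_of_isGδ (hHgδ j)) n)
  have hBdec : ∀ n, DecSigma2 ((B n).restrict (S.restrict f)) := by
    intro n
    apply dec_transfer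
    by_cases he : Even n
    · refine dec_mono (image_mono ((hBH n).trans ?_)) hdecA₁
      rw [hHn n, if_pos he]
      rw [hG₁e]
      exact subset_iUnion G₁ (n / 2)
    · refine dec_mono (image_mono ((hBH n).trans ?_)) hdecA₂
      rw [hHn n, if_neg he]
      rw [hG₂e]
      exact subset_iUnion G₂ (n / 2)
  exact dec_glue hBdisj hBcov hBdelta hBdec

end Sharpness

section Main
variable {X Y : Type*} [TopologicalSpace X] [PolishSpace X] [TopologicalSpace Y]

lemma extract_lemma {f : X → Y} (hf : Sigma3Measurable f) {P : Set Y} {F : ℕ → Set X}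
    {k : ℕ} {m : ℕ} {C : Fin m → Set Y}
    (hCsub : ∀ l, C l ⊆ P)
    (hCdisj : ∀ l₁ l₂, l₁ ≠ l₂ → Disjoint (C l₁) (C l₂))
    (hCcl : ∀ l, IsClosed ((Subtype.val ⁻¹' (C l)) : Set P))
    {U : Set X} (hU : IsOpen U) (h0 : Sharp0 f P (F (k+1)) U)
    (s : Finset (Fin m)) :
    ∀ W : Set X, IsOpen W → W ⊆ U → (W ∩ F (k+1)).Nonempty →
    (∀ l ∈ s, ∀ U' : Set X, ¬ (IsOpen U' ∧ U' ⊆ U ∧ Sharp f (P \ C l) F (k+1) U')) →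
    ∃ W' : Set X, IsOpen W' ∧ W' ⊆ W ∧ (W' ∩ F (k+1)).Nonempty ∧
      ∃ s' ⊆ s, s.card ≤ s'.card + 1 ∧
        ∀ l ∈ s', ∀ V : Set X, IsOpen V → V ⊆ W' → ¬ Sharp f (P \ C l) F k V := by
  induction s using Finset.strongInduction with
  | _ s ih =>
    intro W hWo hWU hWne hbad
    by_cases hcase : ∃ l ∈ s, ∃ V : Set X, IsOpen V ∧ V ⊆ W ∧ Sharp0 f (P \ C l) (F (k+1)) V
    · obtain ⟨l, hls, V, hVo, hVW, hVsharp⟩ := hcase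
      have hVU : V ⊆ U := hVW.trans hWU
      have hnotsharp : ¬ Sharp f (P \ C l) F (k+1) V :=
        fun hs => hbad l hls V ⟨hVo, hVU, hs⟩
      have hrec : ¬ ∀ U' : Set X, IsOpen U' → U' ⊆ V → (U' ∩ F (k+1)).Nonempty →
          ∃ U'' : Set X, IsOpen U'' ∧ U'' ⊆ U' ∧ Sharp f (P \ C l) F k U'' :=
        fun hr => hnotsharp (sharp_succ.2 ⟨hVsharp, hr⟩)
      push_neg at hrec
      obtain ⟨W₁, hW₁o, hW₁V, hW₁ne, hW₁bad⟩ := hrec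
      obtain ⟨W', hW'o, hW'W₁, hW'ne, s'', hs''sub, hcard, hs''bad⟩ :=
        ih (s.erase l) (Finset.erase_ssubset hls) W₁ hW₁o (hW₁V.trans hVU) hW₁ne
          (fun l' hl' => hbad l' (Finset.mem_of_mem_erase hl'))
      refine ⟨W', hW'o, hW'W₁.trans (hW₁V.trans hVW), hW'ne, insert l s'', ?_, ?_, ?_⟩
      · exact Finset.insert_subset hls (hs''sub.trans (Finset.erase_subset l s))
      · have hlnot : l ∉ s'' := fun hc => (Finset.notMem_erase l s) (hs''sub hc)
        rw [Finset.card_insert_of_notMem hlnot]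
        have hce := Finset.card_erase_of_mem hls
        have hpos : 0 < s.card := Finset.card_pos.2 ⟨l, hls⟩
        omega
      · intro l' hl' V' hV'o hV'W' hV'sharp
        rcases Finset.mem_insert.1 hl' with rfl | hl'
        · exact hW₁bad V' hV'o (hV'W'.trans hW'W₁) hV'sharp
        · exact hs''bad l' hl' V' hV'o hV'W' hV'sharp
    · push_neg at hcase
      have hcard : s.card ≤ 1 := by
        rw [Finset.card_le_one]
        intro a ha b hb
        by_contra hab
        exact pair_lemma hf hWo (sharp0_mono h0 hWU hWne) (hCsub a) (hCsub b)
          (hCdisj a b hab) (hCcl a) (hCcl b) (hcase a ha) (hcase b hb)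
      exact ⟨W, hWo, subset_rfl, hWne, ∅, Finset.empty_subset s,
        by simpa using hcard, by simp⟩

lemma main_claim {f : X → Y} (hf : Sigma3Measurable f) {P : Set Y} {F : ℕ → Set X}
    {m : ℕ} {C : Fin m → Set Y}
    (hCsub : ∀ l, C l ⊆ P)
    (hCdisj : ∀ l₁ l₂, l₁ ≠ l₂ → Disjoint (C l₁) (C l₂))
    (hCcl : ∀ l, IsClosed ((Subtype.val ⁻¹' (C l)) : Set P)) :
    ∀ (k : ℕ) (U : Set X), IsOpen U → Sharp f P F k U →
      ∀ t : Finset (Fin m),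
        (∀ l ∈ t, ∀ U' : Set X, ¬ (IsOpen U' ∧ U' ⊆ U ∧ Sharp f (P \ C l) F k U')) →
        t.card ≤ k + 1 := by
  intro k
  induction k with
  | zero =>
    intro U hU hsharp t ht
    have h0 : Sharp0 f P (F 0) U := sharp_zero.1 hsharp
    rw [Nat.zero_add, Finset.card_le_one]
    intro a ha b hb
    by_contra hab
    refine pair_lemma hf hU h0 (hCsub a) (hCsub b) (hCdisj a b hab) (hCcl a) (hCcl b)
      ?_ ?_
    · exact fun V hVo hVU hs => ht a ha V ⟨hVo, hVU, sharp_zero.2 hs⟩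
    · exact fun V hVo hVU hs => ht b hb V ⟨hVo, hVU, sharp_zero.2 hs⟩
  | succ k ihk =>
    intro U hU hsharp t ht
    by_contra hle
    push_neg at hle
    obtain ⟨h0, hrec⟩ := sharp_succ.1 hsharp
    obtain ⟨W', hW'o, hW'U, hW'ne, s', hs't, hcard, hs'bad⟩ :=
      extract_lemma hf hCsub hCdisj hCcl hU h0 t U hU subset_rfl h0.1 ht
    obtain ⟨W'', hW''o, hW''W', hW''sharp⟩ := hrec W' hW'o hW'U hW'ne
    have hle2 : s'.card ≤ k + 1 :=
      ihk W'' hW''o hW''sharp s'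
        (fun l hl U' hc => hs'bad l hl U' hc.1 (hc.2.1.trans hW''W') hc.2.2)
    omega

end Main

/-- Lemma 3.4 (Lemma `sharp`): at most `k + 1` of the sets `C l` can destroy sharpness. -/
theorem stmt10 {X Y : Type*} [TopologicalSpace X] [PolishSpace X]
    [TopologicalSpace Y] [TopologicalSpace.SeparableSpace Y]
    [TopologicalSpace.MetrizableSpace Y]
    (f : X → Y) (hf : Sigma3Measurable f)
    (k : ℕ) (F : ℕ → Set X) (hFcl : ∀ i ≤ k, IsClosed (F i))
    (hFmono : ∀ i j, i ≤ j → j ≤ k → F j ⊆ F i)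
    (P : Set Y) (U : Set X) (hU : IsOpen U)
    (hsharp : Sharp f P F k U)
    (m : ℕ) (C : Fin m → Set Y)
    (hCsub : ∀ l, C l ⊆ P)
    (hCdisj : ∀ l₁ l₂, l₁ ≠ l₂ → Disjoint (C l₁) (C l₂))
    (hCcl : ∀ l, IsClosed ((Subtype.val ⁻¹' (C l)) : Set P)) :
    {l : Fin m | ¬ ∃ U' : Set X, IsOpen U' ∧ U' ⊆ U ∧ Sharp f (P \ C l) F k U'}.ncard
      ≤ k + 1 := by
  classical
  have hfin : {l : Fin m | ¬ ∃ U' : Set X, IsOpen U' ∧ U' ⊆ U ∧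
      Sharp f (P \ C l) F k U'}.Finite := Set.toFinite _
  have hmain := main_claim hf hCsub hCdisj hCcl k U hU hsharp hfin.toFinset ?_
  · rwa [Set.ncard_eq_toFinset_card _ hfin]
  · intro l hl
    rw [Set.Finite.mem_toFinset] at hl
    exact fun U' hc => hl ⟨U', hc⟩
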